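/- arXiv:2306.13556 — 3 statements merged into one kernel-verified Lean document; each statement's English description precedes it below -/
import Mathlib

section
/- Suppose A : ℝ → Matrix (Fin n) (Fin n) ℝ is continuous with A(t+T) = A(t), and Φ satisfies Φ' = A·Φ, Φ(0) = 1, with Φ(t) invertible for all t. Then the function t ↦ Φ(t)⁻¹ · Φ(t+T) is constant, and equals Φ(T). -/
attribute [local instance] Matrix.normedAddCommGroup Matrix.normedSpace

open Set

private lemma matrix_norm_mul_le {n : ℕ} (M N : Matrix (Fin n) (Fin n) ℝ) :
    ‖M * N‖ ≤ (n : ℝ) * ‖M‖ * ‖N‖ := by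
  have h0 : (0:ℝ) ≤ (n : ℝ) * ‖M‖ * ‖N‖ := by positivity
  rw [Matrix.norm_le_iff h0]
  intro i j
  calc ‖(M * N) i j‖ = ‖∑ k, M i k * N k j‖ := by rw [Matrix.mul_apply]
    _ ≤ ∑ k, ‖M i k * N k j‖ := norm_sum_le _ _
    _ ≤ ∑ _k : Fin n, ‖M‖ * ‖N‖ := by
        apply Finset.sum_le_sum
        intro k _
        rw [norm_mul]
        exact mul_le_mul (Matrix.norm_entry_le_entrywise_sup_norm M)
          (Matrix.norm_entry_le_entrywise_sup_norm N) (norm_nonneg _) (norm_nonneg _)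
    _ = (n : ℝ) * ‖M‖ * ‖N‖ := by
        rw [Finset.sum_const, Finset.card_univ, Fintype.card_fin, nsmul_eq_mul, mul_assoc]

theorem stmt_2 {n : ℕ} (T : ℝ) (hT : 0 < T)
    (A Φ : ℝ → Matrix (Fin n) (Fin n) ℝ)
    (hA : Continuous A) (hper : ∀ t, A (t + T) = A t)
    (h0 : Φ 0 = 1) (hunit : ∀ t, IsUnit (Φ t))
    (hΦ : ∀ t, HasDerivAt Φ (A t * Φ t) t) :
    ∀ t, (Φ t)⁻¹ * Φ (t + T) = Φ T := by
  have key : ∀ t, Φ (t + T) = Φ t * Φ T := by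
    intro t
    set a : ℝ := min t 0 - 1 with ha
    set b : ℝ := max t 0 + 1 with hb
    have hab : a < b := by
      have h1 : min t 0 ≤ max t 0 := le_trans (min_le_right _ _) (le_max_right _ _)
      linarith
    have ht0 : (0:ℝ) ∈ Ioo a b := by
      constructor
      · have := min_le_right t 0; linarith
      · have := le_max_right t 0; linarith
    have htmem : t ∈ Icc a b := by
      constructor
      · have := min_le_left t 0; linarith
      · have := le_max_left t 0; linarith
    -- projection onto [a, b]
    set π : ℝ → ℝ := fun s => max a (min b s) with hπ
    have hπmem : ∀ s, π s ∈ Icc a b := fun s =>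
      ⟨le_max_left _ _, max_le hab.le (min_le_left _ _)⟩
    have hπid : ∀ s ∈ Ioo a b, π s = s := by
      intro s hs
      simp only [hπ]
      rw [min_eq_right hs.2.le, max_eq_right hs.1.le]
    -- bound on ‖A‖ over [a,b]
    obtain ⟨C, hC⟩ : ∃ C, ∀ s ∈ Icc a b, ‖A s‖ ≤ C :=
      (isCompact_Icc.exists_bound_of_continuousOn (hA.continuousOn))
    have hC0 : 0 ≤ C := le_trans (norm_nonneg _) (hC a ⟨le_refl a, hab.le⟩)
    set K : NNReal := ⟨(n : ℝ) * C, by positivity⟩ with hK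
    set v : ℝ → Matrix (Fin n) (Fin n) ℝ → Matrix (Fin n) (Fin n) ℝ :=
      fun s x => A (π s) * x with hv
    have hlip : ∀ s, LipschitzWith K (v s) := by
      intro s
      apply LipschitzWith.of_dist_le_mul
      intro x y
      simp only [hv, dist_eq_norm]
      rw [← Matrix.mul_sub]
      calc ‖A (π s) * (x - y)‖ ≤ (n : ℝ) * ‖A (π s)‖ * ‖x - y‖ := matrix_norm_mul_le _ _
        _ ≤ (n : ℝ) * C * ‖x - y‖ := by
            apply mul_le_mul_of_nonneg_right _ (norm_nonneg _)
            exact mul_le_mul_of_nonneg_left (hC _ (hπmem s)) (Nat.cast_nonneg n)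
    set f : ℝ → Matrix (Fin n) (Fin n) ℝ := fun s => Φ (s + T) with hf
    set g : ℝ → Matrix (Fin n) (Fin n) ℝ := fun s => Φ s * Φ T with hg
    have hf' : ∀ s, HasDerivAt f (A s * f s) s := by
      intro s
      have h1 : HasDerivAt (fun s : ℝ => s + T) 1 s := (hasDerivAt_id s).add_const T
      have h2 := (hΦ (s + T)).scomp s h1
      simp [hper, Function.comp_def] at h2; exact h2
    set L : Matrix (Fin n) (Fin n) ℝ →L[ℝ] Matrix (Fin n) (Fin n) ℝ :=
      LinearMap.toContinuousLinearMap (LinearMap.mulRight ℝ (Φ T)) with hL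
    have hLapp : ∀ x, L x = x * Φ T := fun x => rfl
    have hg' : ∀ s, HasDerivAt g (A s * g s) s := by
      intro s
      have h2 := L.hasFDerivAt.comp_hasDerivAt s (hΦ s)
      have : HasDerivAt g (A s * Φ s * Φ T) s := by
        simp only [Function.comp_def] at h2; exact h2
      simpa [mul_assoc] using this
    have heq : EqOn f g (Icc a b) := by
      apply ODE_solution_unique_of_mem_Icc (K := K) (v := v) (s := fun _ => univ)
        (fun s _ => (hlip s).lipschitzOnWith) ht0
      · exact (continuous_iff_continuousAt.mpr fun s => (hf' s).continuousAt).continuousOn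
      · intro s hs
        have := hf' s
        rwa [show A s * f s = v s (f s) by simp [hv, hπid s hs]] at this
      · intro s _; trivial
      · exact (continuous_iff_continuousAt.mpr fun s => (hg' s).continuousAt).continuousOn
      · intro s hs
        have := hg' s
        rwa [show A s * g s = v s (g s) by simp [hv, hπid s hs]] at this
      · intro s _; trivial
      · simp [hf, hg, h0]
    exact heq htmem
  intro t
  rw [key t, ← mul_assoc,
    Matrix.nonsing_inv_mul (Φ t) ((Matrix.isUnit_iff_isUnit_det _).mp (hunit t)), one_mul]
end

section
/- Every invertible matrix C over ℂ has a matrix logarithm: there exists a complex matrix B with exp(B) = C. -/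
attribute [local instance] Matrix.linftyOpNormedRing Matrix.linftyOpNormedAlgebra

open NormedSpace Matrix Finset

variable {n : ℕ}

private lemma comm_aux (N : Matrix (Fin n) (Fin n) ℂ) (c d : ℕ → ℂ) (f g : ℕ → ℕ) (K K' : ℕ) :
    Commute (∑ k ∈ range K, c k • N ^ f k) (∑ k ∈ range K', d k • N ^ g k) := by
  refine Commute.sum_left _ _ _ fun i _ => ?_
  refine Commute.sum_right _ _ _ fun j _ => ?_
  exact (((Commute.refl N).pow_pow _ _).smul_left _).smul_right _

private lemma exp_mulVec (A : Matrix (Fin n) (Fin n) ℂ) (v : Fin n → ℂ) (l : ℂ)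
    (h : A *ᵥ v = l • v) : NormedSpace.exp A *ᵥ v = Complex.exp l • v := by
  have hpow : ∀ k : ℕ, A ^ k *ᵥ v = l ^ k • v := by
    intro k
    induction k with
    | zero => simp
    | succ k ih =>
      rw [pow_succ', ← Matrix.mulVec_mulVec, ih, Matrix.mulVec_smul, h, smul_smul, ← pow_succ]
  let L : Matrix (Fin n) (Fin n) ℂ →ₗ[ℂ] (Fin n → ℂ) :=
    { toFun := fun B => B *ᵥ v
      map_add' := fun B₁ B₂ => Matrix.add_mulVec B₁ B₂ v
      map_smul' := fun c B => (Matrix.smul_mulVec c B v) }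
  have hLc : Continuous L := LinearMap.continuous_of_finiteDimensional L
  have hsum : Summable fun k : ℕ => ((k.factorial : ℂ))⁻¹ • A ^ k := NormedSpace.expSeries_summable' A
  have : NormedSpace.exp A *ᵥ v = L (∑' k : ℕ, ((k.factorial : ℂ))⁻¹ • A ^ k) := by
    rw [NormedSpace.exp_eq_tsum ℂ]; rfl
  rw [this]
  rw [show L (∑' k : ℕ, ((k.factorial : ℂ))⁻¹ • A ^ k)
      = (⟨L, hLc⟩ : Matrix (Fin n) (Fin n) ℂ →L[ℂ] (Fin n → ℂ))
        (∑' k : ℕ, ((k.factorial : ℂ))⁻¹ • A ^ k) from rfl,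
    (⟨L, hLc⟩ : Matrix (Fin n) (Fin n) ℂ →L[ℂ] (Fin n → ℂ)).map_tsum hsum]
  have : ∀ k : ℕ, (⟨L, hLc⟩ : Matrix (Fin n) (Fin n) ℂ →L[ℂ] (Fin n → ℂ)) (((k.factorial : ℂ))⁻¹ • A ^ k)
      = (((k.factorial : ℂ))⁻¹ * l ^ k) • v := by
    intro k
    show (((k.factorial : ℂ))⁻¹ • A ^ k) *ᵥ v = _
    rw [Matrix.smul_mulVec, hpow, smul_smul]
  have hsum2 : Summable fun k : ℕ => ((k.factorial : ℂ))⁻¹ * l ^ k :=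
    (NormedSpace.expSeries_summable' l).congr fun k => by rw [smul_eq_mul]
  rw [tsum_congr this, hsum2.tsum_smul_const, Complex.exp_eq_exp_ℂ, NormedSpace.exp_eq_tsum ℂ]
  congr 1


private lemma hasDerivAt_exp_sum (N : Matrix (Fin n) (Fin n) ℂ) (γ : ℕ → ℂ) (K : ℕ) (t : ℝ) :
    HasDerivAt (fun s : ℝ => NormedSpace.exp (∑ k ∈ range K, (γ k * (s:ℂ)^(k+1)) • N^(k+1)))
      ((∑ k ∈ range K, (((k:ℂ)+1) * γ k * (t:ℂ)^k) • N^(k+1)) *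
        NormedSpace.exp (∑ k ∈ range K, (γ k * (t:ℂ)^(k+1)) • N^(k+1))) t := by
  induction K with
  | zero =>
      simp only [range_zero, sum_empty, NormedSpace.exp_zero, zero_mul]
      exact hasDerivAt_const t (1 : Matrix (Fin n) (Fin n) ℂ)
  | succ K ih =>
      set x := N^(K+1) with hxdef
      have hx : ∀ s : ℝ, Commute (∑ k ∈ range K, (γ k * (s:ℂ)^(k+1)) • N^(k+1))
          ((γ K * (s:ℂ)^(K+1)) • x) := fun s => by
        simpa using comm_aux N (fun k => γ k * (s:ℂ)^(k+1)) (fun _ => γ K * (s:ℂ)^(K+1))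
          (fun k => k+1) (fun _ => K+1) K 1
      have hfun : ∀ s : ℝ, NormedSpace.exp (∑ k ∈ range (K+1), (γ k * (s:ℂ)^(k+1)) • N^(k+1))
          = NormedSpace.exp (∑ k ∈ range K, (γ k * (s:ℂ)^(k+1)) • N^(k+1)) *
            NormedSpace.exp ((γ K * (s:ℂ)^(K+1)) • x) := by
        intro s
        rw [Finset.sum_range_succ, Matrix.exp_add_of_commute _ _ (hx s)]
      have hs : HasDerivAt (fun s : ℝ => γ K * (s:ℂ)^(K+1)) (γ K * (((K:ℂ)+1) * (t:ℂ)^K)) t := by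
        have h1 : HasDerivAt (fun z : ℂ => γ K * z^(K+1)) (γ K * (((K:ℂ)+1) * (t:ℂ)^K)) (t:ℂ) := by
          simpa using (hasDerivAt_pow (K+1) (t:ℂ)).const_mul (γ K)
        exact h1.comp_ofReal
      have hh : HasDerivAt (fun s : ℝ => NormedSpace.exp ((γ K * (s:ℂ)^(K+1)) • x))
          ((γ K * (((K:ℂ)+1) * (t:ℂ)^K)) • (NormedSpace.exp ((γ K * (t:ℂ)^(K+1)) • x) * x)) t :=
        by have := HasDerivAt.scomp t (hasDerivAt_exp_smul_const (𝕂 := ℂ) x (γ K * (t:ℂ)^(K+1))) hs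
           exact this
      have key := ih.mul hh
      have hfe : (fun s : ℝ => NormedSpace.exp (∑ k ∈ range (K+1), (γ k * (s:ℂ)^(k+1)) • N^(k+1)))
          = fun s : ℝ => NormedSpace.exp (∑ k ∈ range K, (γ k * (s:ℂ)^(k+1)) • N^(k+1)) *
            NormedSpace.exp ((γ K * (s:ℂ)^(K+1)) • x) := funext hfun
      rw [hfe, hfun t, Finset.sum_range_succ (f := fun k => (((k:ℂ)+1) * γ k * (t:ℂ)^k) • N^(k+1))]
      convert key using 1
      · rfl
      · rfl
      · rfl
      · rfl
      set g := NormedSpace.exp (∑ k ∈ range K, (γ k * (t:ℂ)^(k+1)) • N^(k+1)) with hg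
      set E2 := NormedSpace.exp ((γ K * (t:ℂ)^(K+1)) • x) with hE2
      have hxg : Commute x g := by
        refine Commute.exp_right ?_
        simpa using (comm_aux N (fun k => γ k * (t:ℂ)^(k+1)) (fun _ => 1) (fun k => k+1)
          (fun _ => K+1) K 1).symm
      have hxE2 : Commute x E2 := Commute.exp_right (((Commute.refl x).smul_right _))
      rw [add_mul, ← mul_assoc]
      congr 1
      rw [smul_mul_assoc, mul_smul_comm]
      rw [show N^(K+1) * (g * E2) = g * (E2 * x) by
        rw [← hxdef, (hxg.mul_right hxE2).eq, mul_assoc]]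
      congr 1
      ring

private lemma exp_unipotent (N : Matrix (Fin n) (Fin n) ℂ) (hN : IsNilpotent N) :
    ∃ B : Matrix (Fin n) (Fin n) ℂ, NormedSpace.exp B = 1 + N ∧
      ∀ X : Matrix (Fin n) (Fin n) ℂ, Commute X N → Commute X B := by
  obtain ⟨m, hm⟩ := hN
  set γ : ℕ → ℂ := fun k => (-1)^(k+1) / (k+1) with hγ
  set u : ℝ → Matrix (Fin n) (Fin n) ℂ :=
    fun s => ∑ k ∈ range m, (γ k * (s:ℂ)^(k+1)) • N^(k+1) with hu
  set ζ : ℝ → Matrix (Fin n) (Fin n) ℂ :=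
    fun s => NormedSpace.exp (u s) * (1 + (s:ℂ) • N) with hζ
  have hcoef : ∀ k : ℕ, ((k:ℂ)+1) * γ k = (-1)^(k+1) := by
    intro k
    have hne : ((k:ℂ)+1) ≠ 0 := Nat.cast_add_one_ne_zero k
    rw [hγ, mul_comm, div_mul_cancel₀ _ hne]
  have hzeta : ∀ t : ℝ, HasDerivAt ζ 0 t := by
    intro t
    have h2 : HasDerivAt (fun s : ℝ => 1 + (s:ℂ) • N) N t := by
      have := (Complex.ofRealCLM.hasDerivAt (x := t)).smul_const N
      have h := this.const_add 1
      simp only [Complex.ofRealCLM_apply, Complex.ofReal_one, one_smul] at h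
      exact h
    have h1 := hasDerivAt_exp_sum N γ m t
    have hmul := h1.mul h2
    set D := ∑ k ∈ range m, (((k:ℂ)+1) * γ k * (t:ℂ)^k) • N^(k+1) with hD
    set E := NormedSpace.exp (u t) with hE
    have hDE : Commute D E := by
      refine Commute.exp_right ?_
      simpa using comm_aux N (fun k => ((k:ℂ)+1) * γ k * (t:ℂ)^k)
        (fun k => γ k * (t:ℂ)^(k+1)) (fun k => k+1) (fun k => k+1) m m
    set b : ℕ → Matrix (Fin n) (Fin n) ℂ :=
      fun j => (((-1:ℂ))^(j+1) * (t:ℂ)^j) • N^(j+1) with hbdef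
    have hDb : D = ∑ k ∈ range m, b k := by
      refine Finset.sum_congr rfl fun k _ => ?_
      rw [hbdef, hcoef k]
    have hkey : D * (1 + (t:ℂ) • N) + N = 0 := by
      have h3 : D * ((t:ℂ) • N) = ∑ k ∈ range m, -b (k+1) := by
        rw [hDb, Finset.sum_mul]
        refine Finset.sum_congr rfl fun k _ => ?_
        rw [hbdef, mul_smul_comm, smul_mul_assoc, smul_smul, ← pow_succ]
        rw [show ((-1:ℂ))^(k+1) * (t:ℂ)^k = -((-1:ℂ))^(k+1+1) * (t:ℂ)^k by ring]
        simp [neg_smul, neg_mul]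
        ring_nf
      rw [mul_add, mul_one, h3, hDb, ← Finset.sum_add_distrib]
      have : ∀ k ∈ range m, b k + -b (k+1) = b k - b (k+1) := fun k _ =>
        (sub_eq_add_neg (b k) (b (k+1))).symm
      rw [Finset.sum_congr rfl this, Finset.sum_range_sub']
      have hb0 : b 0 = -N := by simp [hbdef]
      have hbm : b m = 0 := by
        have hNm : N ^ (m+1) = 0 := by rw [pow_succ, hm, zero_mul]
        simp [hbdef, hNm]
      rw [hb0, hbm]
      abel
    have : D * E * (1 + (t:ℂ) • N) + E * N = 0 := by
      rw [hDE.eq, mul_assoc, ← mul_add, hkey, mul_zero]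
    rw [hζ]
    have hmul' : HasDerivAt (fun s : ℝ => NormedSpace.exp (u s) * (1 + (s:ℂ) • N))
        (D * E * (1 + (t:ℂ) • N) + E * N) t := hmul
    rw [this] at hmul'
    exact hmul'
  have hdiff : Differentiable ℝ ζ := fun t => (hzeta t).differentiableAt
  have hconst : ζ 1 = ζ 0 := is_const_of_deriv_eq_zero hdiff (fun t => (hzeta t).deriv) 1 0
  have hζ0 : ζ 0 = 1 := by
    have hu0 : u 0 = 0 := by
      rw [hu]
      refine Finset.sum_eq_zero fun k _ => ?_
      norm_num
    simp [hζ, hu0]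
  have hζ1 : NormedSpace.exp (u 1) * (1 + N) = 1 := by
    have := hconst.trans hζ0
    simpa [hζ] using this
  refine ⟨-(u 1), ?_, ?_⟩
  case refine_2 =>
    intro X hX
    refine Commute.neg_right ?_
    rw [hu]
    refine Commute.sum_right _ _ _ fun k _ => ?_
    exact ((hX.pow_right (k+1)).smul_right _)
  have hcomm : Commute (-(u 1)) (u 1) := (Commute.refl (u 1)).neg_left
  have : NormedSpace.exp (-(u 1)) * (NormedSpace.exp (u 1) * (1 + N))
      = NormedSpace.exp (-(u 1)) := by rw [hζ1, mul_one]
  rw [← mul_assoc, ← Matrix.exp_add_of_commute _ _ hcomm, neg_add_cancel,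
    NormedSpace.exp_zero, one_mul] at this
  exact this.symm


theorem stmt_5 {n : ℕ} (C : Matrix (Fin n) (Fin n) ℂ) (hC : IsUnit C) :
    ∃ B : Matrix (Fin n) (Fin n) ℂ, NormedSpace.exp B = C := by
  classical
  set φ : Matrix (Fin n) (Fin n) ℂ ≃ₐ[ℂ] ((Fin n → ℂ) →ₗ[ℂ] (Fin n → ℂ)) :=
    Matrix.toLinAlgEquiv' with hφ
  set f : Module.End ℂ (Fin n → ℂ) := φ C with hf
  obtain ⟨ν, hν_mem, σ, hσ_mem, hν_nil, hσ_ss, hf_eq⟩ :=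
    Module.End.exists_isNilpotent_isSemisimple (f := f)
  rw [Algebra.adjoin_singleton_eq_range_aeval, AlgHom.mem_range] at hν_mem hσ_mem
  obtain ⟨p, hp⟩ := hν_mem
  obtain ⟨q0, hq0⟩ := hσ_mem
  have hνσ : Commute ν σ := by
    rw [← hp, ← hq0]; exact (Commute.all p q0).map (Polynomial.aeval f)
  set N : Matrix (Fin n) (Fin n) ℂ := φ.symm ν with hNdef
  set S : Matrix (Fin n) (Fin n) ℂ := φ.symm σ with hSdef
  have hφS : φ S = σ := φ.apply_symm_apply σ
  have hφN : φ N = ν := φ.apply_symm_apply ν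
  have hCNS : C = N + S := by
    apply φ.injective
    rw [map_add, hφS, hφN, ← hf, hf_eq]
  have hNS_comm : Commute N S := hνσ.map φ.symm
  have hN_nil : IsNilpotent N := hν_nil.map φ.symm
  have hNC_comm : Commute N C := by
    rw [hCNS]; exact (Commute.refl N).add_right hNS_comm
  have hS_unit : IsUnit S := by
    have hSeq : S = C + (-N) := by rw [hCNS]; abel
    rw [hSeq]
    exact IsNilpotent.isUnit_add_left_of_commute hN_nil.neg hC (hNC_comm.neg_left)
  have hσ_unit : IsUnit σ := hφS ▸ hS_unit.map φ
  have hTop : (⨆ μ : ℂ, σ.eigenspace μ) = ⊤ := by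
    rw [show (⨆ μ : ℂ, σ.eigenspace μ) = ⨆ μ : ℂ, σ.maxGenEigenspace μ from
      iSup_congr fun μ => (hσ_ss.isFinitelySemisimple.maxGenEigenspace_eq_eigenspace μ).symm]
    exact Module.End.iSup_maxGenEigenspace_eq_top σ
  set T : Finset ℂ := (minpoly ℂ σ).roots.toFinset with hT
  set q : Polynomial ℂ := Lagrange.interpolate T id Complex.log with hq
  set B₁ : Matrix (Fin n) (Fin n) ℂ := Polynomial.aeval S q with hB₁def
  have hB1 : NormedSpace.exp B₁ = S := by
    have hvec : ∀ v : Fin n → ℂ, NormedSpace.exp B₁ *ᵥ v = S *ᵥ v := by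
      intro v
      have hv : v ∈ ⨆ μ : ℂ, σ.eigenspace μ := hTop ▸ Submodule.mem_top
      induction hv using Submodule.iSup_induction' with
      | mem μ x hx =>
          by_cases hx0 : x = 0
          · simp [hx0]
          have hσx : σ x = μ • x := Module.End.mem_eigenspace_iff.mp hx
          have hev : σ.HasEigenvector μ x := ⟨hx, hx0⟩
          have hval : σ.HasEigenvalue μ := Module.End.hasEigenvalue_of_hasEigenvector hev
          have hroot : μ ∈ T := by
            rw [hT, Multiset.mem_toFinset, Polynomial.mem_roots (minpoly.ne_zero_of_finite ℂ σ)]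
            exact Module.End.isRoot_of_hasEigenvalue hval
          have hμ0 : μ ≠ 0 := by
            intro h0
            apply hx0
            have hinj : Function.Injective σ := ((Module.End.isUnit_iff σ).mp hσ_unit).injective
            apply hinj
            rw [hσx, h0, zero_smul, map_zero]
          have hevalq : q.eval μ = Complex.log μ := by
            have := Lagrange.eval_interpolate_at_node (v := id) (r := Complex.log)
              (Set.injOn_id _) hroot
            simpa [hq] using this
          have hB1x : B₁ *ᵥ x = Complex.log μ • x := by
            have h2 : φ B₁ = Polynomial.aeval σ q := by
              rw [hB₁def, ← hφS]
              exact (Polynomial.aeval_algHom_apply (φ : Matrix (Fin n) (Fin n) ℂ →ₐ[ℂ]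
                ((Fin n → ℂ) →ₗ[ℂ] (Fin n → ℂ))) S q).symm
            have h3 : φ B₁ x = B₁ *ᵥ x := Matrix.toLinAlgEquiv'_apply B₁ x
            rw [← h3, h2, Module.End.aeval_apply_of_hasEigenvector hev, hevalq]
          have h4 := exp_mulVec B₁ x (Complex.log μ) hB1x
          rw [h4, Complex.exp_log hμ0]
          have h5 : S *ᵥ x = σ x := (Matrix.toLinAlgEquiv'_apply S x).symm.trans (by rw [hφS])
          rw [h5, hσx]
      | zero => simp
      | add x y _ _ hx hy => simp [Matrix.mulVec_add, hx, hy]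
    apply φ.injective
    apply LinearMap.ext
    intro v
    rw [show φ (NormedSpace.exp B₁) v = NormedSpace.exp B₁ *ᵥ v from
      Matrix.toLinAlgEquiv'_apply _ v, show φ S v = S *ᵥ v from Matrix.toLinAlgEquiv'_apply _ v]
    exact hvec v
  set u1 := hS_unit.unit with hu1
  have hu1S : (u1 : Matrix (Fin n) (Fin n) ℂ) = S := IsUnit.unit_spec hS_unit
  set N' : Matrix (Fin n) (Fin n) ℂ := (↑u1⁻¹ : Matrix (Fin n) (Fin n) ℂ) * N with hN'def
  have hNu1 : Commute N (↑u1 : Matrix (Fin n) (Fin n) ℂ) := by rw [hu1S]; exact hNS_comm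
  have hNinv : Commute N (↑u1⁻¹ : Matrix (Fin n) (Fin n) ℂ) := hNu1.units_inv_right
  have hN'_nil : IsNilpotent N' := hNinv.symm.isNilpotent_mul_left hN_nil
  have hSN' : Commute S N' := by
    have h1 : Commute S (↑u1⁻¹ : Matrix (Fin n) (Fin n) ℂ) := by
      have : Commute S (↑u1 : Matrix (Fin n) (Fin n) ℂ) := by rw [hu1S]
      exact this.units_inv_right
    exact h1.mul_right hNS_comm.symm
  obtain ⟨B₂, hB₂, hB₂comm⟩ := exp_unipotent N' hN'_nil
  have hB₁N' : Commute B₁ N' := by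
    refine Commute.symm ?_
    rw [hB₁def, Polynomial.aeval_eq_sum_range]
    exact Commute.sum_right _ _ _ fun i _ => ((hSN'.symm.pow_right i).smul_right _)
  have hB₁B₂ : Commute B₁ B₂ := hB₂comm B₁ hB₁N'
  refine ⟨B₁ + B₂, ?_⟩
  have hfinal : S * (1 + N') = C := by
    rw [mul_add, mul_one, hN'def, ← mul_assoc]
    rw [show S * (↑u1⁻¹ : Matrix (Fin n) (Fin n) ℂ) = 1 by rw [← hu1S]; exact Units.mul_inv u1]
    rw [one_mul, hCNS, add_comm]
  rw [Matrix.exp_add_of_commute _ _ hB₁B₂, hB1, hB₂, hfinal]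
end

section
/- Suppose the quiescent solution is asymptotically stable, i.e. the fundamental matrix satisfies ‖Φ(t)Φ(t₀)⁻¹‖ ≤ M·exp(-α(t-t₀)) for some M, α > 0. Then for any bounded continuous f : ℝ → ℝⁿ, x(t) := ∫_{-∞}^{t} Φ(t)Φ(t')⁻¹ f(t') dt' is well-defined (the integral converges absolutely) and satisfies ẋ(t) = A(t)x(t) + f(t). -/
attribute [local instance] Matrix.linftyOpNormedRing Matrix.linftyOpNormedSpace

open MeasureTheory Set

theorem stmt_15 {n : ℕ} (A Φ : ℝ → Matrix (Fin n) (Fin n) ℝ)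
    (hA : Continuous A)
    (hΦ : ∀ t, HasDerivAt Φ (A t * Φ t) t)
    (hunit : ∀ t, IsUnit (Φ t))
    (M α : ℝ) (hM : 0 < M) (hα : 0 < α)
    (hbound : ∀ t₀ t : ℝ, t₀ ≤ t → ‖Φ t * (Φ t₀)⁻¹‖ ≤ M * Real.exp (-α * (t - t₀)))
    (f : ℝ → Fin n → ℝ) (hfc : Continuous f)
    (Cf : ℝ) (hfb : ∀ t, ‖f t‖ ≤ Cf)
    (x : ℝ → Fin n → ℝ)
    (hx : ∀ t, x t = ∫ t' in Set.Iic t, (Φ t * (Φ t')⁻¹).mulVec (f t')) :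
    (∀ t, MeasureTheory.IntegrableOn
        (fun t' => (Φ t * (Φ t')⁻¹).mulVec (f t')) (Set.Iic t)) ∧
    ∀ t, HasDerivAt x ((A t).mulVec (x t) + f t) t := by
  have hdet : ∀ t, IsUnit (Φ t).det := fun t => (Matrix.isUnit_iff_isUnit_det _).1 (hunit t)
  have hΦc : Continuous Φ := continuous_iff_continuousAt.2 fun t => (hΦ t).continuousAt
  have hinvc : Continuous fun t => (Φ t)⁻¹ := by
    have heq : (fun t => (Φ t)⁻¹) = fun t => Ring.inverse (Φ t) := by
      funext s; exact Matrix.nonsing_inv_eq_ringInverse _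
    rw [heq, continuous_iff_continuousAt]
    intro t
    have h1 : ContinuousAt Ring.inverse (Φ t) := by
      have h2 := NormedRing.inverse_continuousAt (hunit t).unit
      rw [(hunit t).unit_spec] at h2
      exact h2
    exact h1.comp hΦc.continuousAt
  have hB : IsBoundedBilinearMap ℝ
      (fun p : Matrix (Fin n) (Fin n) ℝ × (Fin n → ℝ) => p.1.mulVec p.2) := by
    refine ⟨fun M₁ M₂ v => Matrix.add_mulVec _ _ _,
      fun c Mm v => Matrix.smul_mulVec _ _ _,
      fun Mm v₁ v₂ => Matrix.mulVec_add _ _ _,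
      fun c Mm v => Matrix.mulVec_smul _ _ _,
      ⟨1, one_pos, fun Mm v => by simpa using Matrix.linfty_opNorm_mulVec Mm v⟩⟩
  have hexp : ∀ s : ℝ, IntegrableOn (fun t' => Real.exp (-α * (s - t'))) (Iic s) := by
    intro s
    rw [← (Measure.measurePreserving_neg (volume : Measure ℝ)).integrableOn_comp_preimage
        (Homeomorph.neg ℝ).measurableEmbedding]
    simp only [Function.comp_def, neg_preimage, neg_Iic, sub_neg_eq_add]
    rw [integrableOn_Ici_iff_integrableOn_Ioi]
    have h1 := (exp_neg_integrableOn_Ioi (-s) hα).const_mul (Real.exp (-α * s))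
    have hfun : (fun u : ℝ => Real.exp (-α * (s + u)))
        = fun u => Real.exp (-α * s) * Real.exp (-α * u) := by
      funext u; rw [← Real.exp_add, ← mul_add]
    rw [hfun]
    exact h1
  have hint : ∀ s, IntegrableOn (fun t' => (Φ s * (Φ t')⁻¹).mulVec (f t')) (Iic s) := by
    intro s
    have hc : Continuous fun t' => (Φ s * (Φ t')⁻¹).mulVec (f t') :=
      hB.continuous.comp ((continuous_const.mul hinvc).prodMk hfc)
    refine Integrable.mono' ((hexp s).const_mul (M * Cf)) hc.aestronglyMeasurable.restrict ?_
    refine (ae_restrict_iff' measurableSet_Iic).2 (ae_of_all _ fun t' ht' => ?_)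
    calc ‖(Φ s * (Φ t')⁻¹).mulVec (f t')‖
        ≤ ‖Φ s * (Φ t')⁻¹‖ * ‖f t'‖ := Matrix.linfty_opNorm_mulVec _ _
      _ ≤ (M * Real.exp (-α * (s - t'))) * Cf :=
          mul_le_mul (hbound t' s ht') (hfb t') (norm_nonneg _) (by positivity)
      _ = (M * Cf) * Real.exp (-α * (s - t')) := by ring
  refine ⟨hint, ?_⟩
  set L : Matrix (Fin n) (Fin n) ℝ → (Fin n → ℝ) →L[ℝ] (Fin n → ℝ) := fun Mm =>
    LinearMap.toContinuousLinearMap (Matrix.mulVecLin Mm) with hL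
  have hLapp : ∀ Mm v, L Mm v = Mm.mulVec v := by intro Mm v; simp [hL]
  have hinth : ∀ s, IntegrableOn (fun t' => (Φ t')⁻¹.mulVec (f t')) (Iic s) := by
    intro s
    have h1 := (L (Φ s)⁻¹).integrable_comp (hint s)
    refine IntegrableOn.congr_fun h1 (fun t' _ => ?_) measurableSet_Iic
    rw [hLapp, Matrix.mulVec_mulVec, ← Matrix.mul_assoc,
      Matrix.nonsing_inv_mul _ (hdet s), Matrix.one_mul]
  set g : ℝ → Fin n → ℝ := fun t => ∫ t' in Iic t, (Φ t')⁻¹.mulVec (f t') with hg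
  have hxg : ∀ t, x t = (Φ t).mulVec (g t) := by
    intro t
    rw [hx t]
    have heq : ∀ t', (Φ t * (Φ t')⁻¹).mulVec (f t') = (L (Φ t)) ((Φ t')⁻¹.mulVec (f t')) := by
      intro t'; rw [hLapp, Matrix.mulVec_mulVec]
    simp_rw [heq]
    rw [ContinuousLinearMap.integral_comp_comm _ (hinth t), hLapp]
  have hhc : Continuous fun t' => (Φ t')⁻¹.mulVec (f t') :=
    hB.continuous.comp (hinvc.prodMk hfc)
  have hgd : ∀ t, HasDerivAt g ((Φ t)⁻¹.mulVec (f t)) t := by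
    intro t
    have hg0 : g = fun s => g 0 + ∫ u in (0:ℝ)..s, (Φ u)⁻¹.mulVec (f u) := by
      funext s
      rw [← intervalIntegral.integral_Iic_sub_Iic (hinth 0) (hinth s)]
      simp [hg]
    have hD : HasDerivAt (fun s => ∫ u in (0:ℝ)..s, (Φ u)⁻¹.mulVec (f u))
        ((Φ t)⁻¹.mulVec (f t)) t :=
      intervalIntegral.integral_hasDerivAt_right (hhc.intervalIntegrable 0 t)
        (hhc.stronglyMeasurableAtFilter _ _) hhc.continuousAt
    rw [hg0]
    exact hD.const_add (g 0)
  intro t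
  have hxeq : x = fun s => (Φ s).mulVec (g s) := funext hxg
  rw [hxeq]
  have hpair : HasDerivAt (fun s => (Φ s, g s)) (A t * Φ t, (Φ t)⁻¹.mulVec (f t)) t :=
    (hΦ t).prodMk (hgd t)
  have hcomp := (hB.hasFDerivAt (Φ t, g t)).comp_hasDerivAt t hpair
  convert hcomp using 1
  case e'_4 => rfl
  case e'_5 => rfl
  case e'_6 => rfl
  case e'_8 => rfl
  rw [IsBoundedBilinearMap.deriv_apply]
  simp only [Matrix.mulVec_mulVec]
  rw [Matrix.mul_nonsing_inv _ (hdet t), Matrix.one_mulVec]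
  exact add_comm _ _
end
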